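/- If |V_M(R)| = m > 1, then the graph G_M(R) is either connected or has exactly m connected components; equivalently, either G_M(R) is connected, or no two distinct min-max nodes of R are at Manhattan distance 1 (every component is a single vertex). -/

import Mathlib

/-- Manhattan distance on the grid ℤ × ℤ. -/
def md (u v : ℤ × ℤ) : ℕ := (u.1 - v.1).natAbs + (u.2 - v.2).natAbs

/-- Eccentricity of a grid node with respect to the robot set `R`:
the maximum Manhattan distance from a robot of `R` to the node. -/
def ecc (R : Finset (ℤ × ℤ)) (v : ℤ × ℤ) : ℕ := R.sup (fun u => md u v)

/-- `v` is a min-max node of `R`. -/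
def IsMinMax (R : Finset (ℤ × ℤ)) (v : ℤ × ℤ) : Prop :=
  ∀ v' : ℤ × ℤ, ecc R v ≤ ecc R v'

/-- The subgraph `G_M(R)` of the infinite grid graph induced by the set of
min-max nodes of `R`: two min-max nodes are adjacent iff their Manhattan
distance is 1. -/
def GM (R : Finset (ℤ × ℤ)) : SimpleGraph {v : ℤ × ℤ // IsMinMax R v} where
  Adj u v := md u.val v.val = 1
  symm := by
    constructor
    intro u v h
    simp only [md] at h ⊢
    omega
  loopless := by
    constructor
    intro u h
    simp [md] at h

lemma md_le_iff (u v : ℤ × ℤ) (E : ℕ) : md u v ≤ E ↔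
    u.1 + u.2 ≤ v.1 + v.2 + E ∧ v.1 + v.2 ≤ u.1 + u.2 + E ∧
    u.1 - u.2 ≤ v.1 - v.2 + E ∧ v.1 - v.2 ≤ u.1 - u.2 + E := by
  unfold md; omega

lemma ecc_le_iff (R : Finset (ℤ × ℤ)) (v : ℤ × ℤ) (E : ℕ) :
    ecc R v ≤ E ↔ ∀ u ∈ R, md u v ≤ E := Finset.sup_le_iff

lemma mm_iff (R : Finset (ℤ × ℤ)) (hR : R.Nonempty) (v₀ : ℤ × ℤ) (h₀ : IsMinMax R v₀)
    (v : ℤ × ℤ) :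
    IsMinMax R v ↔
      (R.sup' hR (fun u => u.1 + u.2) ≤ v.1 + v.2 + ecc R v₀ ∧
       v.1 + v.2 ≤ R.inf' hR (fun u => u.1 + u.2) + ecc R v₀ ∧
       R.sup' hR (fun u => u.1 - u.2) ≤ v.1 - v.2 + ecc R v₀ ∧
       v.1 - v.2 ≤ R.inf' hR (fun u => u.1 - u.2) + ecc R v₀) := by
  have hkey : ∀ w : ℤ × ℤ, (ecc R w ≤ ecc R v₀ ↔
      (R.sup' hR (fun u => u.1 + u.2) ≤ w.1 + w.2 + ecc R v₀ ∧
       w.1 + w.2 ≤ R.inf' hR (fun u => u.1 + u.2) + ecc R v₀ ∧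
       R.sup' hR (fun u => u.1 - u.2) ≤ w.1 - w.2 + ecc R v₀ ∧
       w.1 - w.2 ≤ R.inf' hR (fun u => u.1 - u.2) + ecc R v₀)) := by
    intro w
    rw [ecc_le_iff]
    constructor
    · intro h
      refine ⟨?_, ?_, ?_, ?_⟩
      · rw [Finset.sup'_le_iff]; intro u hu; have := (md_le_iff u w _).mp (h u hu); omega
      · rw [← sub_le_iff_le_add, Finset.le_inf'_iff]
        intro u hu; have := (md_le_iff u w _).mp (h u hu); omega
      · rw [Finset.sup'_le_iff]; intro u hu; have := (md_le_iff u w _).mp (h u hu); omega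
      · rw [← sub_le_iff_le_add, Finset.le_inf'_iff]
        intro u hu; have := (md_le_iff u w _).mp (h u hu); omega
    · rintro ⟨h1, h2, h3, h4⟩ u hu
      have l1 := Finset.le_sup' (fun u : ℤ × ℤ => u.1 + u.2) hu
      have l2 := Finset.inf'_le (fun u : ℤ × ℤ => u.1 + u.2) hu
      have l3 := Finset.le_sup' (fun u : ℤ × ℤ => u.1 - u.2) hu
      have l4 := Finset.inf'_le (fun u : ℤ × ℤ => u.1 - u.2) hu
      rw [md_le_iff]
      omega
  constructor
  · intro h; exact (hkey v).mp (h v₀)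
  · intro h v'
    calc ecc R v ≤ ecc R v₀ := (hkey v).mpr h
    _ ≤ ecc R v' := h₀ v'

/-- If the min-max set is a parity-constrained "Chebyshev rectangle" whose
two intervals both have length at least one, then `G_M(R)` is connected. -/
lemma connected_of_pair (R : Finset (ℤ × ℤ)) (A B C D : ℤ) (E : ℕ)
    (hchar : ∀ z : ℤ × ℤ, IsMinMax R z ↔
      (B ≤ z.1 + z.2 + E ∧ z.1 + z.2 ≤ A + E ∧ D ≤ z.1 - z.2 + E ∧ z.1 - z.2 ≤ C + E))
    (hBA : B + 1 ≤ A + 2 * E) (hDC : D + 1 ≤ C + 2 * E) :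
    (GM R).Connected := by
  have key : ∀ n : ℕ, ∀ x y : {v : ℤ × ℤ // IsMinMax R v},
      (x.1.1 + x.1.2 - (y.1.1 + y.1.2)).natAbs ⊔
        (x.1.1 - x.1.2 - (y.1.1 - y.1.2)).natAbs ≤ n →
      (GM R).Reachable x y := by
    intro n
    induction n with
    | zero =>
      intro x y h
      have hxy : x = y := Subtype.ext (Prod.ext_iff.mpr ⟨by omega, by omega⟩)
      subst hxy
      exact SimpleGraph.Reachable.refl x
    | succ n ih =>
      intro x y h
      by_cases hxy : x = y
      · subst hxy; exact SimpleGraph.Reachable.refl x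
      obtain ⟨hx1, hx2, hx3, hx4⟩ := (hchar x.1).mp x.2
      obtain ⟨hy1, hy2, hy3, hy4⟩ := (hchar y.1).mp y.2
      have hne' : x.1.1 ≠ y.1.1 ∨ x.1.2 ≠ y.1.2 := by
        by_contra hc
        push_neg at hc
        exact hxy (Subtype.ext (Prod.ext_iff.mpr ⟨hc.1, hc.2⟩))
      have hdp : ∃ dp : ℤ, (dp = 1 ∨ dp = -1) ∧
          B ≤ x.1.1 + x.1.2 + dp + E ∧ x.1.1 + x.1.2 + dp ≤ A + E ∧
          (x.1.1 + x.1.2 + dp - (y.1.1 + y.1.2)).natAbs + 1 ≤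
            (x.1.1 + x.1.2 - (y.1.1 + y.1.2)).natAbs ⊔
              (x.1.1 - x.1.2 - (y.1.1 - y.1.2)).natAbs := by
        rcases lt_trichotomy (x.1.1 + x.1.2) (y.1.1 + y.1.2) with hlt | heq | hgt
        · exact ⟨1, Or.inl rfl, by omega, by omega, by omega⟩
        · by_cases hA : x.1.1 + x.1.2 < A + E
          · exact ⟨1, Or.inl rfl, by omega, by omega, by omega⟩
          · exact ⟨-1, Or.inr rfl, by omega, by omega, by omega⟩
        · exact ⟨-1, Or.inr rfl, by omega, by omega, by omega⟩
      have hdq : ∃ dq : ℤ, (dq = 1 ∨ dq = -1) ∧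
          D ≤ x.1.1 - x.1.2 + dq + E ∧ x.1.1 - x.1.2 + dq ≤ C + E ∧
          (x.1.1 - x.1.2 + dq - (y.1.1 - y.1.2)).natAbs + 1 ≤
            (x.1.1 + x.1.2 - (y.1.1 + y.1.2)).natAbs ⊔
              (x.1.1 - x.1.2 - (y.1.1 - y.1.2)).natAbs := by
        rcases lt_trichotomy (x.1.1 - x.1.2) (y.1.1 - y.1.2) with hlt | heq | hgt
        · exact ⟨1, Or.inl rfl, by omega, by omega, by omega⟩
        · by_cases hC : x.1.1 - x.1.2 < C + E
          · exact ⟨1, Or.inl rfl, by omega, by omega, by omega⟩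
          · exact ⟨-1, Or.inr rfl, by omega, by omega, by omega⟩
        · exact ⟨-1, Or.inr rfl, by omega, by omega, by omega⟩
      obtain ⟨dp, hdp1, hdpB, hdpA, hdpd⟩ := hdp
      obtain ⟨dq, hdq1, hdqD, hdqC, hdqd⟩ := hdq
      obtain ⟨a, b, hab1, hab2, hab3⟩ :
          ∃ a b : ℤ, dp = a + b ∧ dq = a - b ∧ a.natAbs + b.natAbs = 1 := by
        rcases hdp1 with rfl | rfl <;> rcases hdq1 with rfl | rfl
        · exact ⟨1, 0, by norm_num, by norm_num, by norm_num⟩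
        · exact ⟨0, 1, by norm_num, by norm_num, by norm_num⟩
        · exact ⟨0, -1, by norm_num, by norm_num, by norm_num⟩
        · exact ⟨-1, 0, by norm_num, by norm_num, by norm_num⟩
      have hz : IsMinMax R (x.1.1 + a, x.1.2 + b) := by
        refine (hchar (x.1.1 + a, x.1.2 + b)).mpr ⟨?_, ?_, ?_, ?_⟩ <;> dsimp only <;> omega
      have hadjz : (GM R).Adj x ⟨(x.1.1 + a, x.1.2 + b), hz⟩ := by
        show md x.1 (x.1.1 + a, x.1.2 + b) = 1
        unfold md
        dsimp only
        omega
      refine hadjz.reachable.trans (ih ⟨(x.1.1 + a, x.1.2 + b), hz⟩ y ?_)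
      dsimp only
      omega
  have hex : ∃ z : ℤ × ℤ, IsMinMax R z := by
    rcases Int.even_or_odd (B + D) with ⟨k, hk⟩ | ⟨k, hk⟩
    · exact ⟨(k - E, B - k), (hchar _).mpr (by dsimp only; omega)⟩
    · exact ⟨(k + 1 - E, B - k - 1), (hchar _).mpr (by dsimp only; omega)⟩
  obtain ⟨z, hz⟩ := hex
  haveI : Nonempty {v : ℤ × ℤ // IsMinMax R v} := ⟨⟨z, hz⟩⟩
  exact ⟨fun x y =>
    key ((x.1.1 + x.1.2 - (y.1.1 + y.1.2)).natAbs ⊔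
      (x.1.1 - x.1.2 - (y.1.1 - y.1.2)).natAbs) x y le_rfl⟩

/-- If `|V_M(R)| = m > 1`, then `G_M(R)` is either connected or
has exactly `m` components; equivalently, either `G_M(R)` is connected, or no
two distinct min-max nodes of `R` are at Manhattan distance 1 (so every
component is a single vertex). -/
theorem stmt_14 (R : Finset (ℤ × ℤ)) (hR : R.Nonempty) (m : ℕ) (hm : 1 < m)
    (hcard : {v : ℤ × ℤ | IsMinMax R v}.ncard = m) :
    (GM R).Connected ∨
      ∀ v v' : ℤ × ℤ, IsMinMax R v → IsMinMax R v' → v ≠ v' → md v v' ≠ 1 := by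
  by_cases hadj : ∃ v w : ℤ × ℤ, IsMinMax R v ∧ IsMinMax R w ∧ md v w = 1
  · left
    obtain ⟨v, w, hv, hw, hvw⟩ := hadj
    refine connected_of_pair R (R.inf' hR (fun u => u.1 + u.2))
      (R.sup' hR (fun u => u.1 + u.2)) (R.inf' hR (fun u => u.1 - u.2))
      (R.sup' hR (fun u => u.1 - u.2)) (ecc R v) (mm_iff R hR v hv) ?_ ?_
    · obtain ⟨h1, h2, h3, h4⟩ := (mm_iff R hR v hv v).mp hv
      obtain ⟨g1, g2, g3, g4⟩ := (mm_iff R hR v hv w).mp hw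
      unfold md at hvw
      omega
    · obtain ⟨h1, h2, h3, h4⟩ := (mm_iff R hR v hv v).mp hv
      obtain ⟨g1, g2, g3, g4⟩ := (mm_iff R hR v hv w).mp hw
      unfold md at hvw
      omega
  · right
    intro v v' hv hv' _ hmd
    exact hadj ⟨v, v', hv, hv', hmd⟩
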